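/- Fix integers k > ℓ ≥ 0, set n = k + ℓ + 1, and fix t ∈ (0, π/2). Define f : ℂ² → ℂ^{k+1} by f(z,w) = (√(binom(k,α))·z^{k−α} w^α)_{α=0,…,k}, h : ℂ² → ℂ^{ℓ+1} by h(z,w) = (√(binom(ℓ,α'))·z^{ℓ−α'} w^{α'})_{α'=0,…,ℓ}, and, viewing ℂ^{n+1} = ℂ^{k+1} ⊕ ℂ^{ℓ+1}, set e₀ = (cos t · f, i sin t · h) and e₁ = (i sin t · f, cos t · h). Then: (i) for every (z,w) ∈ S³, ‖e₀(z,w)‖ = 1, ‖e₁(z,w)‖ = 1, and e₀(z,w) is Hermitian-orthogonal to e₁(z,w); and (ii) for every (z,w) ∈ ℂ², De₀(z,w)[(iz, iw)] = i·(k cos²t + ℓ sin²t)·e₀(z,w) + (k − ℓ)·sin t·cos t·e₁(z,w). -/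

import Mathlib

open BigOperators

noncomputable def Lmono (c : ℂ) (a b : ℕ) (p : ℂ × ℂ) : (ℂ × ℂ) →L[ℝ] ℂ :=
  (c • (p.1 ^ a • (((b : ℂ) * p.2 ^ (b - 1)) • ContinuousLinearMap.snd ℂ ℂ ℂ) +
    p.2 ^ b • (((a : ℂ) * p.1 ^ (a - 1)) • ContinuousLinearMap.fst ℂ ℂ ℂ))).restrictScalars ℝ

lemma mono_deriv (c : ℂ) (a b : ℕ) (p : ℂ × ℂ) :
    HasFDerivAt (fun q : ℂ × ℂ => c * (q.1 ^ a * q.2 ^ b)) (Lmono c a b p) p := by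
  apply HasFDerivAt.restrictScalars
  exact ((((hasDerivAt_pow a p.1).comp_hasFDerivAt p (hasFDerivAt_fst)).mul
    ((hasDerivAt_pow b p.2).comp_hasFDerivAt p (hasFDerivAt_snd))).const_mul c)

lemma eval_key (z : ℂ) (m : ℕ) : (m : ℂ) * z ^ (m - 1) * (Complex.I * z) = Complex.I * m * z ^ m := by
  cases m with
  | zero => simp
  | succ m => rw [Nat.add_sub_cancel, pow_succ]; ring

lemma mono_eval (c : ℂ) (a b : ℕ) (p : ℂ × ℂ) :
    Lmono c a b p (Complex.I * p.1, Complex.I * p.2)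
      = Complex.I * ((a : ℂ) + (b : ℂ)) * (c * (p.1 ^ a * p.2 ^ b)) := by
  simp only [Lmono, ContinuousLinearMap.coe_restrictScalars', ContinuousLinearMap.add_apply,
    ContinuousLinearMap.smul_apply, ContinuousLinearMap.coe_snd', ContinuousLinearMap.coe_fst',
    smul_eq_mul]
  rw [mul_assoc ((b:ℂ)), mul_assoc ((a:ℂ))]
  have h1 := eval_key p.2 b
  have h2 := eval_key p.1 a
  rw [mul_assoc] at h1 h2
  rw [h1, h2]; ring

lemma norm_mono_sq (C : ℕ) (z w : ℂ) (a b : ℕ) :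
    ‖(Real.sqrt C : ℂ) * z ^ a * w ^ b‖ ^ 2 = (C : ℝ) * (‖z‖ ^ 2) ^ a * (‖w‖ ^ 2) ^ b := by
  rw [norm_mul, norm_mul, norm_pow, norm_pow, Complex.norm_real, Real.norm_eq_abs,
    abs_of_nonneg (Real.sqrt_nonneg _)]
  rw [mul_pow, mul_pow, Real.sq_sqrt (by positivity), ← pow_mul, ← pow_mul,
    ← pow_mul, ← pow_mul]
  ring_nf

lemma binom_sum (m : ℕ) (x y : ℝ) (hxy : x + y = 1) :
    ∑ α : Fin (m + 1), (m.choose (α : ℕ) : ℝ) * x ^ (m - (α : ℕ)) * y ^ (α : ℕ) = 1 := by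
  rw [Fin.sum_univ_eq_sum_range (fun α => (m.choose α : ℝ) * x ^ (m - α) * y ^ α)]
  calc ∑ α ∈ Finset.range (m+1), (m.choose α : ℝ) * x ^ (m - α) * y ^ α
      = ∑ α ∈ Finset.range (m+1), y ^ α * x ^ (m - α) * (m.choose α : ℝ) := by
        apply Finset.sum_congr rfl; intros; ring
    _ = (y + x) ^ m := (add_pow y x m).symm
    _ = 1 := by rw [add_comm, hxy, one_pow]

lemma unit_sum (m : ℕ) (z w : ℂ) (hS : ‖z‖ ^ 2 + ‖w‖ ^ 2 = 1) :
    ∑ α : Fin (m + 1),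
      ‖(Real.sqrt (m.choose (α : ℕ)) : ℂ) * z ^ (m - (α : ℕ)) * w ^ (α : ℕ)‖ ^ 2 = 1 := by
  have : ∀ α : Fin (m + 1),
      ‖(Real.sqrt (m.choose (α : ℕ)) : ℂ) * z ^ (m - (α : ℕ)) * w ^ (α : ℕ)‖ ^ 2
      = (m.choose (α : ℕ) : ℝ) * (‖z‖ ^ 2) ^ (m - (α : ℕ)) * (‖w‖ ^ 2) ^ (α : ℕ) :=
    fun α => norm_mono_sq _ z w _ _
  rw [Finset.sum_congr rfl fun α _ => this α]
  exact binom_sum m _ _ hS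

lemma conj_mul_self (x : ℂ) : (starRingEnd ℂ) x * x = ((‖x‖ ^ 2 : ℝ) : ℂ) := by
  rw [mul_comm, Complex.mul_conj, Complex.normSq_eq_norm_sq]


/-- For integers `k > ℓ ≥ 0`, `n = k + ℓ + 1`, and `t ∈ (0, π/2)`, the
maps `e₀ = (cos t · f, i sin t · h)` and `e₁ = (i sin t · f, cos t · h)` built from the
standard highest weight vectors `f`, `h` satisfy: (i) on `S³` they are unit vectors which
are Hermitian-orthogonal to each other, and (ii) the derivative of `e₀` in the Hopf
direction `(iz, iw)` equals `i(k cos²t + ℓ sin²t)·e₀ + (k−ℓ) sin t cos t·e₁`. -/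
theorem e₀_e₁_frame_and_Hopf_derivative
    (k ℓ n : ℕ) (hkl : ℓ < k) (hn : n = k + ℓ + 1)
    (t : ℝ) (ht₀ : 0 < t) (ht₁ : t < Real.pi / 2)
    (f : ℂ × ℂ → Fin (k + 1) → ℂ)
    (h : ℂ × ℂ → Fin (ℓ + 1) → ℂ)
    (hf : ∀ p α, f p α =
      (Real.sqrt (k.choose (α : ℕ)) : ℂ) * p.1 ^ (k - (α : ℕ)) * p.2 ^ (α : ℕ))
    (hh : ∀ p α', h p α' =
      (Real.sqrt (ℓ.choose (α' : ℕ)) : ℂ) * p.1 ^ (ℓ - (α' : ℕ)) * p.2 ^ (α' : ℕ))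
    (e₀ e₁ : ℂ × ℂ → (Fin (k + 1) → ℂ) × (Fin (ℓ + 1) → ℂ))
    (he₀ : ∀ p, e₀ p =
      ((Real.cos t : ℂ) • f p, (Complex.I * (Real.sin t : ℂ)) • h p))
    (he₁ : ∀ p, e₁ p =
      ((Complex.I * (Real.sin t : ℂ)) • f p, (Real.cos t : ℂ) • h p)) :
    (∀ z w : ℂ, ‖z‖ ^ 2 + ‖w‖ ^ 2 = 1 →
      (∑ α, ‖(e₀ (z, w)).1 α‖ ^ 2) + (∑ α', ‖(e₀ (z, w)).2 α'‖ ^ 2) = 1 ∧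
      (∑ α, ‖(e₁ (z, w)).1 α‖ ^ 2) + (∑ α', ‖(e₁ (z, w)).2 α'‖ ^ 2) = 1 ∧
      (∑ α, (starRingEnd ℂ) ((e₀ (z, w)).1 α) * (e₁ (z, w)).1 α) +
        (∑ α', (starRingEnd ℂ) ((e₀ (z, w)).2 α') * (e₁ (z, w)).2 α') = 0) ∧
    (∀ p : ℂ × ℂ,
      fderiv ℝ e₀ p (Complex.I * p.1, Complex.I * p.2) =
        (Complex.I * ((k : ℂ) * (Real.cos t : ℂ) ^ 2 +
          (ℓ : ℂ) * (Real.sin t : ℂ) ^ 2)) • e₀ p +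
        (((k : ℂ) - (ℓ : ℂ)) * (Real.sin t : ℂ) * (Real.cos t : ℂ)) • e₁ p) := by
  have pythR := Real.sin_sq_add_cos_sq t
  have pyth : (Real.sin t : ℂ) ^ 2 + (Real.cos t : ℂ) ^ 2 = 1 := by exact_mod_cast pythR
  constructor
  · intro z w hS
    have hfs : ∑ α, ‖f (z, w) α‖ ^ 2 = 1 := by
      simp only [hf]; exact unit_sum k z w hS
    have hhs : ∑ α', ‖h (z, w) α'‖ ^ 2 = 1 := by
      simp only [hh]; exact unit_sum ℓ z w hS
    have hnI : ‖Complex.I * (Real.sin t : ℂ)‖ = |Real.sin t| := by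
      rw [norm_mul, Complex.norm_I, one_mul, Complex.norm_real, Real.norm_eq_abs]
    refine ⟨?_, ?_, ?_⟩
    · simp only [he₀, Pi.smul_apply, norm_smul, mul_pow, ← Finset.mul_sum, hfs, hhs,
        mul_one, hnI, Complex.norm_real, Real.norm_eq_abs, sq_abs]
      linarith
    · simp only [he₁, Pi.smul_apply, norm_smul, mul_pow, ← Finset.mul_sum, hfs, hhs,
        mul_one, hnI, Complex.norm_real, Real.norm_eq_abs, sq_abs]
      linarith
    · have h1 : ∀ α : Fin (k+1),
          (starRingEnd ℂ) ((e₀ (z, w)).1 α) * ((e₁ (z, w)).1 α)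
          = ((Real.cos t : ℂ) * (Complex.I * (Real.sin t : ℂ))) * ((‖f (z,w) α‖ ^ 2 : ℝ) : ℂ) := by
        intro α
        simp only [he₀, he₁, Pi.smul_apply, smul_eq_mul, map_mul, Complex.conj_ofReal]
        rw [← conj_mul_self (f (z,w) α)]; ring
      have h2 : ∀ α' : Fin (ℓ+1),
          (starRingEnd ℂ) ((e₀ (z, w)).2 α') * ((e₁ (z, w)).2 α')
          = ((-Complex.I * (Real.sin t : ℂ)) * (Real.cos t : ℂ)) * ((‖h (z,w) α'‖ ^ 2 : ℝ) : ℂ) := by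
        intro α'
        simp only [he₀, he₁, Pi.smul_apply, smul_eq_mul, map_mul, Complex.conj_ofReal,
          Complex.conj_I]
        rw [← conj_mul_self (h (z,w) α')]; ring
      rw [Finset.sum_congr rfl fun α _ => h1 α, Finset.sum_congr rfl fun α' _ => h2 α',
        ← Finset.mul_sum, ← Finset.mul_sum]
      have hfs' : (∑ α, ((‖f (z,w) α‖ ^ 2 : ℝ) : ℂ)) = 1 := by
        rw [← Complex.ofReal_sum]; exact_mod_cast hfs
      have hhs' : (∑ α', ((‖h (z,w) α'‖ ^ 2 : ℝ) : ℂ)) = 1 := by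
        rw [← Complex.ofReal_sum]; exact_mod_cast hhs
      rw [hfs', hhs']; ring
  · intro p
    have hkα : ∀ α : Fin (k+1), (k - (α : ℕ)) + (α : ℕ) = k :=
      fun α => Nat.sub_add_cancel (Nat.lt_succ_iff.mp α.isLt)
    have hlα : ∀ α' : Fin (ℓ+1), (ℓ - (α' : ℕ)) + (α' : ℕ) = ℓ :=
      fun α' => Nat.sub_add_cancel (Nat.lt_succ_iff.mp α'.isLt)
    have he₀' : e₀ = fun q : ℂ × ℂ =>
        ((Real.cos t : ℂ) • (fun α : Fin (k+1) =>
            (Real.sqrt (k.choose (α : ℕ)) : ℂ) * (q.1 ^ (k - (α : ℕ)) * q.2 ^ (α : ℕ))),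
         (Complex.I * (Real.sin t : ℂ)) • (fun α' : Fin (ℓ+1) =>
            (Real.sqrt (ℓ.choose (α' : ℕ)) : ℂ) * (q.1 ^ (ℓ - (α' : ℕ)) * q.2 ^ (α' : ℕ)))) := by
      funext q
      rw [he₀ q]
      refine Prod.ext ?_ ?_ <;> simp only <;> congr 1 <;> funext α <;>
        [rw [hf]; rw [hh]] <;> ring
    have hD : HasFDerivAt e₀
        (((Real.cos t : ℂ) • ContinuousLinearMap.pi (fun α : Fin (k+1) =>
            Lmono (Real.sqrt (k.choose (α : ℕ)) : ℂ) (k - (α : ℕ)) (α : ℕ) p)).prod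
         ((Complex.I * (Real.sin t : ℂ)) • ContinuousLinearMap.pi (fun α' : Fin (ℓ+1) =>
            Lmono (Real.sqrt (ℓ.choose (α' : ℕ)) : ℂ) (ℓ - (α' : ℕ)) (α' : ℕ) p))) p := by
      rw [he₀']
      exact HasFDerivAt.prodMk (HasFDerivAt.const_smul (hasFDerivAt_pi.2 fun α => mono_deriv _ _ _ p)
          ((Real.cos t : ℂ)))
        (HasFDerivAt.const_smul (hasFDerivAt_pi.2 fun α' => mono_deriv _ _ _ p)
          ((Complex.I * (Real.sin t : ℂ))))
    rw [hD.fderiv]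
    rw [he₀ p, he₁ p]
    simp only [ContinuousLinearMap.prod_apply, ContinuousLinearMap.smul_apply,
      ContinuousLinearMap.pi_apply, mono_eval, Prod.smul_mk, Prod.mk_add_mk]
    refine Prod.ext ?_ ?_ <;> simp only <;> funext α <;>
      simp only [Pi.smul_apply, Pi.add_apply, smul_eq_mul, hf, hh]
    · have hc : ((k - (α : ℕ) : ℕ) : ℂ) + ((α : ℕ) : ℂ) = (k : ℂ) := by
        rw [← Nat.cast_add, hkα α]
      rw [ContinuousLinearMap.pi_apply, mono_eval, hc]
      linear_combination (-(Complex.I * (Real.cos t : ℂ) *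
        ((Real.sqrt (k.choose (α : ℕ)) : ℂ) * (p.1 ^ (k - (α : ℕ)) * p.2 ^ (α : ℕ))) * (k : ℂ))) * pyth
    · have hc : ((ℓ - (α : ℕ) : ℕ) : ℂ) + ((α : ℕ) : ℂ) = (ℓ : ℂ) := by
        rw [← Nat.cast_add, hlα α]
      rw [ContinuousLinearMap.pi_apply, mono_eval, hc]
      have hIsq : (Complex.I) ^ 2 = -1 := Complex.I_sq
      linear_combination ((Real.sin t : ℂ) *
          ((Real.sqrt (ℓ.choose (α : ℕ)) : ℂ) * (p.1 ^ (ℓ - (α : ℕ)) * p.2 ^ (α : ℕ))) * (ℓ : ℂ)) * pyth +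
        ((Real.sin t : ℂ) *
          ((Real.sqrt (ℓ.choose (α : ℕ)) : ℂ) * (p.1 ^ (ℓ - (α : ℕ)) * p.2 ^ (α : ℕ))) *
          ((ℓ : ℂ) - (k : ℂ) * (Real.cos t : ℂ) ^ 2 - (ℓ : ℂ) * (Real.sin t : ℂ) ^ 2)) * hIsq
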